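/- Let (c_n) be a sequence of nonnegative extended reals and define J_lower := liminf_{n→∞} (1/n) Σ_{k=0}^{n−1} c_k and m_α := (1−α) Σ_{n=0}^∞ α^n c_n for α ∈ (0,1). Then J_lower ≤ liminf_{α↑1} m_α. -/

import Mathlib

open Filter Topology
open scoped ENNReal

private lemma geom_shift (a : ℝ≥0∞) (k : ℕ) :
    ∑' n : ℕ, (if k ≤ n then a ^ n else 0) = a ^ k * ∑' n : ℕ, a ^ n := by
  have hinj : Function.Injective (fun m : ℕ => m + k) := add_left_injective k
  have hsupp : Function.support (fun n : ℕ => if k ≤ n then a ^ n else 0)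
      ⊆ Set.range (fun m : ℕ => m + k) := by
    intro n hn
    by_cases h : k ≤ n
    · exact ⟨n - k, by simp [Nat.sub_add_cancel h]⟩
    · simp [h] at hn
  rw [← hinj.tsum_eq hsupp]
  have heq : ∀ m : ℕ, (if k ≤ m + k then a ^ (m + k) else 0) = a ^ m * a ^ k := by
    intro m
    rw [if_pos (Nat.le_add_left k m), pow_add]
  simp only [heq]
  rw [ENNReal.tsum_mul_right, mul_comm]

private lemma abel_identity (a : ℝ≥0∞) (c : ℕ → ℝ≥0∞) :
    ∑' n : ℕ, a ^ n * (∑ k ∈ Finset.range (n + 1), c k)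
      = (∑' n : ℕ, a ^ n) * ∑' k : ℕ, a ^ k * c k := by
  have step1 : ∀ n : ℕ, a ^ n * (∑ k ∈ Finset.range (n + 1), c k)
      = ∑' k : ℕ, (if k ≤ n then a ^ n * c k else 0) := by
    intro n
    rw [Finset.mul_sum]
    rw [tsum_eq_sum (s := Finset.range (n + 1))
      (by intro b hb; rw [Finset.mem_range] at hb; rw [if_neg (by omega)])]
    refine Finset.sum_congr rfl fun k hk => ?_
    rw [Finset.mem_range] at hk
    rw [if_pos (by omega)]
  simp only [step1]
  rw [ENNReal.tsum_comm]
  have step2 : ∀ k : ℕ, (∑' n : ℕ, if k ≤ n then a ^ n * c k else 0)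
      = (a ^ k * c k) * ∑' n : ℕ, a ^ n := by
    intro k
    have h : ∀ n : ℕ, (if k ≤ n then a ^ n * c k else 0)
        = (if k ≤ n then a ^ n else 0) * c k := by
      intro n; split <;> simp
    simp only [h]
    rw [ENNReal.tsum_mul_right, geom_shift, mul_right_comm]
  simp only [step2]
  rw [ENNReal.tsum_mul_right, mul_comm]

theorem stmt_11 (c : ℕ → ℝ≥0∞) :
    Filter.atTop.liminf (fun n : ℕ => (∑ k ∈ Finset.range n, c k) / (n : ℝ≥0∞))
    ≤ Filter.liminf
      (fun α : ℝ => (1 - ENNReal.ofReal α) * ∑' n : ℕ, (ENNReal.ofReal α) ^ n * c n)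
      (nhdsWithin 1 (Set.Ioo (0:ℝ) 1)) := by
  apply ENNReal.le_of_forall_nnreal_lt
  intro r hr
  obtain ⟨N0, hN0⟩ := (eventually_lt_of_lt_liminf hr).exists_forall_of_atTop
  set N : ℕ := N0 + 1 with hNdef
  have hS : ∀ n, N ≤ n → (r : ℝ≥0∞) * n ≤ ∑ k ∈ Finset.range n, c k := by
    intro n hn
    have h1 : (r : ℝ≥0∞) < (∑ k ∈ Finset.range n, c k) / (n : ℝ≥0∞) :=
      hN0 n (by omega)
    have hn0 : (n : ℝ≥0∞) ≠ 0 := Nat.cast_ne_zero.mpr (by omega)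
    exact (ENNReal.le_div_iff_mul_le (Or.inl hn0)
      (Or.inl (ENNReal.natCast_ne_top n))).mp h1.le
  -- pointwise key bound
  have key : ∀ α ∈ Set.Ioo (0:ℝ) 1,
      (r : ℝ≥0∞) * (ENNReal.ofReal α) ^ N
        ≤ (1 - ENNReal.ofReal α) * ∑' n : ℕ, (ENNReal.ofReal α) ^ n * c n := by
    intro α hα
    set a : ℝ≥0∞ := ENNReal.ofReal α with ha
    have ha1 : a < 1 := ENNReal.ofReal_lt_one.mpr hα.2
    have h1a0 : (1 : ℝ≥0∞) - a ≠ 0 := (tsub_pos_of_lt ha1).ne'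
    have h1atop : (1 : ℝ≥0∞) - a ≠ ⊤ := (tsub_le_self.trans_lt ENNReal.one_lt_top).ne
    set G : ℝ≥0∞ := ∑' n : ℕ, a ^ n with hG
    have hGval : G = (1 - a)⁻¹ := ENNReal.tsum_geometric a
    have hG0 : G ≠ 0 := by
      refine fun h => one_ne_zero (α := ℝ≥0∞) ?_
      have := ENNReal.le_tsum (f := fun n : ℕ => a ^ n) 0
      simp only [pow_zero] at this
      exact le_antisymm (h ▸ this) zero_le
    have hGtop : G ≠ ⊤ := hGval ▸ ENNReal.inv_ne_top.mpr h1a0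
    -- sum of (m+1) a^m equals G * G
    have hsq : ∑' n : ℕ, a ^ n * ((n : ℝ≥0∞) + 1) = G * G := by
      have h := abel_identity a (fun _ => 1)
      simp only [Finset.sum_const, Finset.card_range, nsmul_eq_mul, mul_one,
        Nat.cast_add, Nat.cast_one] at h
      rw [hG]
      exact h
    -- lower bound the Abel sum A
    have hA : (r : ℝ≥0∞) * a ^ N * (G * G)
        ≤ ∑' n : ℕ, a ^ n * (∑ k ∈ Finset.range (n + 1), c k) := by
      calc (r : ℝ≥0∞) * a ^ N * (G * G)
          = ∑' m : ℕ, (r : ℝ≥0∞) * a ^ N * (a ^ m * ((m : ℝ≥0∞) + 1)) := by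
            rw [← hsq, ENNReal.tsum_mul_left]
        _ ≤ ∑' m : ℕ, a ^ (N + m) *
              (∑ k ∈ Finset.range ((N + m) + 1), c k) := by
            refine ENNReal.tsum_le_tsum fun m => ?_
            have h1 : (r : ℝ≥0∞) * ((N + m : ℕ) + 1 : ℝ≥0∞)
                ≤ ∑ k ∈ Finset.range ((N + m) + 1), c k := by
              have := hS (N + m + 1) (by omega)
              simpa [Nat.cast_add] using this
            calc (r : ℝ≥0∞) * a ^ N * (a ^ m * ((m : ℝ≥0∞) + 1))
                = a ^ (N + m) * ((r : ℝ≥0∞) * ((m : ℝ≥0∞) + 1)) := by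
                  rw [pow_add]; ring
              _ ≤ a ^ (N + m) * (∑ k ∈ Finset.range ((N + m) + 1), c k) := by
                  refine mul_le_mul_right (le_trans (mul_le_mul_right
                    (add_le_add_left ?_ 1) (r : ℝ≥0∞)) h1) _
                  exact_mod_cast Nat.le_add_left m N
        _ ≤ ∑' n : ℕ, a ^ n * (∑ k ∈ Finset.range (n + 1), c k) :=
            ENNReal.tsum_comp_le_tsum_of_injective
              (f := fun m : ℕ => N + m) (add_right_injective N) _
    rw [abel_identity a c] at hA
    have hT : (r : ℝ≥0∞) * a ^ N * G ≤ ∑' k : ℕ, a ^ k * c k := by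
      have := (ENNReal.mul_le_mul_iff_right hG0 hGtop
        (b := (r : ℝ≥0∞) * a ^ N * G) (c := ∑' k : ℕ, a ^ k * c k)).mp
      apply this
      calc G * ((r : ℝ≥0∞) * a ^ N * G) = (r : ℝ≥0∞) * a ^ N * (G * G) := by ring
        _ ≤ G * ∑' k : ℕ, a ^ k * c k := hA
    calc (r : ℝ≥0∞) * a ^ N
        = (1 - a) * ((r : ℝ≥0∞) * a ^ N * (1 - a)⁻¹) := by
          rw [show (1 - a) * ((r : ℝ≥0∞) * a ^ N * (1 - a)⁻¹)
              = (r : ℝ≥0∞) * a ^ N * ((1 - a) * (1 - a)⁻¹) by ring,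
            ENNReal.mul_inv_cancel h1a0 h1atop, mul_one]
      _ ≤ (1 - a) * ∑' n : ℕ, a ^ n * c n := by
          gcongr
          rw [← hGval]; exact hT
  -- take liminf
  have hNeBot : (nhdsWithin (1:ℝ) (Set.Ioo (0:ℝ) 1)).NeBot :=
    right_nhdsWithin_Ioo_neBot (by norm_num)
  have htend : Tendsto (fun α : ℝ => (r : ℝ≥0∞) * (ENNReal.ofReal α) ^ N)
      (nhdsWithin 1 (Set.Ioo (0:ℝ) 1)) (𝓝 ((r : ℝ≥0∞))) := by
    have h1 : Tendsto (fun α : ℝ => ENNReal.ofReal α)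
        (nhdsWithin 1 (Set.Ioo (0:ℝ) 1)) (𝓝 1) := by
      have := (ENNReal.continuous_ofReal.tendsto 1).mono_left
        (nhdsWithin_le_nhds (s := Set.Ioo (0:ℝ) 1))
      simpa using this
    have h2 : Tendsto (fun α : ℝ => (ENNReal.ofReal α) ^ N)
        (nhdsWithin 1 (Set.Ioo (0:ℝ) 1)) (𝓝 1) := by
      simpa using ENNReal.Tendsto.pow h1 (n := N)
    simpa using ENNReal.Tendsto.const_mul h2 (Or.inl one_ne_zero)
  calc (r : ℝ≥0∞)
      = Filter.liminf (fun α : ℝ => (r : ℝ≥0∞) * (ENNReal.ofReal α) ^ N)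
          (nhdsWithin 1 (Set.Ioo (0:ℝ) 1)) := htend.liminf_eq.symm
    _ ≤ _ := liminf_le_liminf (eventually_mem_nhdsWithin.mono key)
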